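/- arXiv:math/0612303 — 2 statements merged into one kernel-verified Lean document; each statement's English description precedes it below -/
import Mathlib

section
/- Let (B_t)_{t∈[0,1]} be a standard Brownian motion: a stochastic process with almost surely continuous sample paths, B₀ = 0, independent increments, and B_t − B_s distributed as a centered Gaussian of variance t − s for 0 ≤ s ≤ t ≤ 1. Then almost surely, the set of local minimizers of the path t ↦ B_t(ω), i.e. the set of t ∈ (0,1) for which there exists ε > 0 with B_t(ω) ≤ B_s(ω) for all s ∈ (t−ε, t+ε) ∩ [0,1], is dense in (0,1). -/
open MeasureTheory ProbabilityTheory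


noncomputable def bmGrid (p q : ℝ) (n : ℕ) : Fin (n+2) → ℝ :=
  fun i => p + (i : ℕ) * (q - p) / (n+1)

lemma bmGrid_mono {p q : ℝ} (hpq : p ≤ q) (n : ℕ) : Monotone (bmGrid p q n) := by
  intro i j hij
  unfold bmGrid
  have : ((i : ℕ) : ℝ) ≤ ((j : ℕ) : ℝ) := by exact_mod_cast hij
  gcongr

lemma bmGrid_mem {p q : ℝ} (hpq : p ≤ q) (n : ℕ) (i : Fin (n+2)) :
    bmGrid p q n i ∈ Set.Icc p q := by
  unfold bmGrid
  have h1 : (0:ℝ) ≤ (i : ℕ) := by positivity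
  have h2 : ((i : ℕ) : ℝ) ≤ (n:ℝ) + 1 := by
    have := i.isLt
    have : (i : ℕ) ≤ n + 1 := by omega
    exact_mod_cast this
  have hn : (0:ℝ) < (n:ℝ) + 1 := by positivity
  have hqp : 0 ≤ q - p := by linarith
  constructor
  · have : 0 ≤ ((i:ℕ):ℝ) * (q - p) / ((n:ℝ)+1) := by positivity
    linarith
  · have key : ((i:ℕ):ℝ) * (q - p) / ((n:ℝ)+1) ≤ q - p := by
      rw [div_le_iff₀ hn]
      nlinarith
    linarith

lemma bmGrid_succ_sub {p q : ℝ} (n : ℕ) (i : Fin (n+1)) :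
    bmGrid p q n i.succ - bmGrid p q n i.castSucc = (q - p) / (n+1) := by
  unfold bmGrid
  rw [Fin.val_succ, Fin.coe_castSucc]
  push_cast
  ring


lemma gauss_ici (v : NNReal) (hv : v ≠ 0) : gaussianReal 0 v (Set.Ici 0) = 1/2 ∧ gaussianReal 0 v (Set.Iic 0) = 1/2 := by
  set m := gaussianReal 0 v with hm
  have hmap : m.map (fun x => (-1 : ℝ) * x) = m := by
    rw [hm, gaussianReal_map_const_mul]
    norm_num
  have hsymm : m (Set.Ici 0) = m (Set.Iic 0) := by
    conv_lhs => rw [← hmap]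
    rw [Measure.map_apply (by fun_prop) measurableSet_Ici]
    congr 1
    ext x
    simp
  have hzero : m {(0:ℝ)} = 0 := by
    exact (gaussianReal_absolutelyContinuous 0 hv) (by simp)
  have hsum : m (Set.Ici 0) + m (Set.Iic 0) = 1 := by
    have := measure_union_add_inter (μ := m) (Set.Ici (0:ℝ)) measurableSet_Iic (t := Set.Iic 0)
    have hu : Set.Ici (0:ℝ) ∪ Set.Iic 0 = Set.univ := by
      ext x; simp [le_total 0 x, or_comm]
    have hi : Set.Ici (0:ℝ) ∩ Set.Iic 0 = {0} := by
      ext x; simp [le_antisymm_iff, and_comm]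
    rw [hu, hi, hzero, add_zero, measure_univ] at this
    exact this.symm
  rw [← hsymm] at hsum
  have h2 : (2:ENNReal) * m (Set.Ici 0) = 1 := by rw [two_mul]; exact hsum
  have : m (Set.Ici 0) = 1/2 := by
    exact (ENNReal.eq_div_iff (by norm_num) (by norm_num)).mpr h2
  exact ⟨this, hsymm ▸ this⟩


lemma no_min_implies_monotone {f : ℝ → ℝ} (hf : ContinuousOn f (Set.Icc 0 1))
    {t ε : ℝ} (ht : t ∈ Set.Ioo (0:ℝ) 1) (hε : 0 < ε)
    (hno : ∀ c : ℝ, |c - t| < ε →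
      ¬ (c ∈ Set.Ioo (0:ℝ) 1 ∧ ∃ δ > (0:ℝ), ∀ s ∈ Set.Ioo (c - δ) (c + δ) ∩ Set.Icc (0:ℝ) 1,
        f c ≤ f s)) :
    ∃ p q : ℚ, 0 ≤ (p:ℝ) ∧ (p:ℝ) < q ∧ (q:ℝ) ≤ 1 ∧
      (MonotoneOn f (Set.Icc (p:ℝ) q) ∨ AntitoneOn f (Set.Icc (p:ℝ) q)) := by
  obtain ⟨ht0, ht1⟩ := ht
  set a' : ℝ := max (t - ε/2) (t/2) with ha'
  set b' : ℝ := min (t + ε/2) ((t+1)/2) with hb'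
  have ha'0 : 0 < a' := lt_max_of_lt_right (by linarith)
  have ha't : a' < t := max_lt (by linarith) (by linarith)
  have htb' : t < b' := lt_min (by linarith) (by linarith)
  have hb'1 : b' < 1 := lt_of_le_of_lt (min_le_right _ _) (by linarith)
  have hball : ∀ x, a' ≤ x → x ≤ b' → |x - t| < ε := by
    intro x h1 h2
    have h3 : t - ε/2 ≤ x := le_trans (le_max_left _ _) h1
    have h4 : x ≤ t + ε/2 := le_trans h2 (min_le_left _ _)
    rw [abs_sub_lt_iff]; constructor <;> linarith
  have hsub01 : Set.Icc a' b' ⊆ Set.Icc (0:ℝ) 1 := fun x hx =>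
    ⟨le_of_lt (lt_of_lt_of_le ha'0 hx.1), le_of_lt (lt_of_le_of_lt hx.2 hb'1)⟩
  -- quasiconcavity
  have Q : ∀ x y z : ℝ, a' ≤ x → x < y → y < z → z ≤ b' → min (f x) (f z) ≤ f y := by
    intro x y z hax hxy hyz hzb
    by_contra hlt
    push_neg at hlt
    have hfy1 : f y < f x := lt_of_lt_of_le hlt (min_le_left _ _)
    have hfy2 : f y < f z := lt_of_lt_of_le hlt (min_le_right _ _)
    have hsub : Set.Icc x z ⊆ Set.Icc (0:ℝ) 1 := by
      apply Set.Subset.trans _ hsub01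
      exact Set.Icc_subset_Icc hax hzb
    obtain ⟨c, hc, hcmin⟩ := isCompact_Icc.exists_isMinOn
      (Set.nonempty_Icc.mpr (le_of_lt (lt_trans hxy hyz))) (hf.mono hsub)
    have hy : y ∈ Set.Icc x z := ⟨le_of_lt hxy, le_of_lt hyz⟩
    have hcy : f c ≤ f y := hcmin hy
    have hcx : c ≠ x := fun h => absurd (h ▸ hcy) (not_le.mpr hfy1)
    have hcz : c ≠ z := fun h => absurd (h ▸ hcy) (not_le.mpr hfy2)
    have hcI : c ∈ Set.Ioo x z := ⟨lt_of_le_of_ne hc.1 (Ne.symm hcx), lt_of_le_of_ne hc.2 hcz⟩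
    refine hno c (hball c (le_trans hax hc.1) (le_trans hc.2 hzb)) ⟨⟨?_, ?_⟩, ?_⟩
    · exact lt_of_lt_of_le ha'0 (le_trans hax hc.1)
    · exact lt_of_le_of_lt (le_trans hc.2 hzb) hb'1
    · refine ⟨min (c - x) (z - c), lt_min (by linarith [hcI.1]) (by linarith [hcI.2]), ?_⟩
      intro s hs
      apply hcmin
      obtain ⟨⟨hs1, hs2⟩, _⟩ := hs
      constructor
      · have := min_le_left (c - x) (z - c); linarith
      · have := min_le_right (c - x) (z - c); linarith
  -- max point
  obtain ⟨c, hc, hcmax⟩ := isCompact_Icc.exists_isMaxOn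
    (Set.nonempty_Icc.mpr (le_of_lt (lt_trans ha't htb'))) (hf.mono hsub01)
  rcases eq_or_lt_of_le hc.1 with hac | hac
  · -- c = a', antitone on [c, b']
    have hcb : c < b' := hac ▸ lt_trans ha't htb'
    have anti : AntitoneOn f (Set.Icc c b') := by
      intro x hx y hy hxy
      rcases eq_or_lt_of_le hx.1 with hcx | hcx
      · exact hcx ▸ hcmax ⟨hac.le.trans hy.1, hy.2⟩
      rcases eq_or_lt_of_le hxy with rfl | hxy
      · exact le_refl _
      have := Q c x y (hac ▸ le_refl a') hcx hxy hy.2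
      have hfy : f y ≤ f c := hcmax ⟨hac.le.trans hy.1, hy.2⟩
      calc f y = min (f c) (f y) := (min_eq_right hfy).symm
        _ ≤ f x := this
    obtain ⟨p, hp1, hp2⟩ := exists_rat_btwn hcb
    obtain ⟨q, hq1, hq2⟩ := exists_rat_btwn hp2
    refine ⟨p, q, ?_, ?_, ?_, Or.inr (anti.mono (Set.Icc_subset_Icc hp1.le hq2.le))⟩
    · exact le_of_lt (lt_of_lt_of_le ha'0 (hac.le.trans hp1.le))
    · exact_mod_cast hq1
    · exact le_of_lt (lt_trans hq2 hb'1)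
  · -- a' < c, monotone on [a', c]
    have mono : MonotoneOn f (Set.Icc a' c) := by
      intro x hx y hy hxy
      rcases eq_or_lt_of_le hy.2 with hyc | hyc
      · exact hyc ▸ hcmax ⟨hx.1, hx.2.trans hc.2⟩
      rcases eq_or_lt_of_le hxy with rfl | hxy
      · exact le_refl _
      have := Q x y c hx.1 hxy hyc hc.2
      have hfx : f x ≤ f c := hcmax ⟨hx.1, hx.2.trans hc.2⟩
      calc f x = min (f x) (f c) := (min_eq_left hfx).symm
        _ ≤ f y := this
    obtain ⟨p, hp1, hp2⟩ := exists_rat_btwn hac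
    obtain ⟨q, hq1, hq2⟩ := exists_rat_btwn hp2
    refine ⟨p, q, ?_, ?_, ?_, Or.inl (mono.mono (Set.Icc_subset_Icc hp1.le hq2.le))⟩
    · exact le_of_lt (lt_trans ha'0 hp1)
    · exact_mod_cast hq1
    · exact le_of_lt (lt_of_le_of_lt (le_trans hq2.le hc.2) hb'1)

/-- For a standard Brownian motion `(B t)_{t ∈ [0,1]}` (a.s. continuous paths, `B 0 = 0`,
independent increments, `B t - B s` centered Gaussian of variance `t - s`), almost surely the
set of local minimizers of the path `t ↦ B t ω` is dense in `(0,1)`. -/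
theorem brownian_local_minimizers_dense
    {Ω : Type*} [MeasurableSpace Ω] (P : Measure Ω) [IsProbabilityMeasure P]
    (B : ℝ → Ω → ℝ)
    (hmeas : ∀ t : ℝ, Measurable (B t))
    (h0 : ∀ᵐ ω ∂P, B 0 ω = 0)
    (hcont : ∀ᵐ ω ∂P, ContinuousOn (fun t => B t ω) (Set.Icc 0 1))
    (hindep : ∀ (n : ℕ) (t : Fin (n + 1) → ℝ), Monotone t →
      (∀ i, t i ∈ Set.Icc (0 : ℝ) 1) →
      iIndepFun
        (fun i : Fin n => fun ω => B (t i.succ) ω - B (t i.castSucc) ω) P)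
    (hgauss : ∀ s t : ℝ, 0 ≤ s → s ≤ t → t ≤ 1 →
      Measure.map (fun ω => B t ω - B s ω) P = gaussianReal 0 (t - s).toNNReal) :
    ∀ᵐ ω ∂P, Set.Ioo (0 : ℝ) 1 ⊆
      closure {t : ℝ | t ∈ Set.Ioo (0 : ℝ) 1 ∧
        ∃ ε > (0 : ℝ), ∀ s ∈ Set.Ioo (t - ε) (t + ε) ∩ Set.Icc (0 : ℝ) 1,
          B t ω ≤ B s ω} := by
  classical
  set Nev : ℝ → ℝ → ℕ → Set Ω := fun p q n =>
    (⋂ i : Fin (n+1), (fun ω => B (bmGrid p q n i.succ) ω - B (bmGrid p q n i.castSucc) ω) ⁻¹'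
      Set.Ici 0) ∪
    (⋂ i : Fin (n+1), (fun ω => B (bmGrid p q n i.succ) ω - B (bmGrid p q n i.castSucc) ω) ⁻¹'
      Set.Iic 0) with hNevdef
  have hNev : ∀ p q : ℝ, 0 ≤ p → p < q → q ≤ 1 → ∀ n, P (Nev p q n) ≤ 2⁻¹ ^ n := by
    intro p q hp0 hpq hq1 n
    set g := bmGrid p q n with hg
    have hmem01 : ∀ i, g i ∈ Set.Icc (0:ℝ) 1 := fun i =>
      Set.Icc_subset_Icc hp0 hq1 (bmGrid_mem hpq.le n i)
    have hind := hindep (n+1) g (bmGrid_mono hpq.le n) hmem01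
    have hdiff : ∀ i : Fin (n+1), g i.succ - g i.castSucc = (q - p)/(n+1) :=
      fun i => bmGrid_succ_sub n i
    have hvpos : (0:ℝ) < (q - p)/(n+1) := div_pos (by linarith) (by positivity)
    have hvne : ((q - p)/(n+1)).toNNReal ≠ 0 := by
      simp only [ne_eq, ← NNReal.coe_eq_zero]
      rw [Real.coe_toNNReal _ hvpos.le]
      exact ne_of_gt hvpos
    have hmapped : ∀ i : Fin (n+1),
        Measure.map (fun ω => B (g i.succ) ω - B (g i.castSucc) ω) P =
          gaussianReal 0 ((q - p)/(n+1)).toNNReal := by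
      intro i
      have h1 := hgauss (g i.castSucc) (g i.succ) (hmem01 i.castSucc).1
        (bmGrid_mono hpq.le n (Fin.castSucc_lt_succ : i.castSucc < i.succ).le) (hmem01 i.succ).2
      rw [hdiff i] at h1
      exact h1
    have hmeasdiff : ∀ i : Fin (n+1),
        Measurable (fun ω => B (g i.succ) ω - B (g i.castSucc) ω) :=
      fun i => (hmeas _).sub (hmeas _)
    have hhalf : ∀ (s : Set ℝ), MeasurableSet s →
        (gaussianReal 0 ((q - p)/(n+1)).toNNReal) s = 1/2 → ∀ i : Fin (n+1),
        P ((fun ω => B (g i.succ) ω - B (g i.castSucc) ω) ⁻¹' s) = 1/2 := by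
      intro s hs hval i
      rw [← Measure.map_apply (hmeasdiff i) hs, hmapped i, hval]
    have hleft : P (⋂ i : Fin (n+1),
        (fun ω => B (g i.succ) ω - B (g i.castSucc) ω) ⁻¹' Set.Ici 0) = 2⁻¹ ^ (n+1) := by
      rw [hind.meas_iInter (fun i => ⟨Set.Ici 0, measurableSet_Ici, rfl⟩)]
      have := hhalf (Set.Ici 0) measurableSet_Ici (gauss_ici _ hvne).1
      simp only [this]
      simp [Finset.prod_const, one_div]
    have hright : P (⋂ i : Fin (n+1),
        (fun ω => B (g i.succ) ω - B (g i.castSucc) ω) ⁻¹' Set.Iic 0) = 2⁻¹ ^ (n+1) := by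
      rw [hind.meas_iInter (fun i => ⟨Set.Iic 0, measurableSet_Iic, rfl⟩)]
      have := hhalf (Set.Iic 0) measurableSet_Iic (gauss_ici _ hvne).2
      simp only [this]
      simp [Finset.prod_const, one_div]
    calc P (Nev p q n) ≤ _ + _ := measure_union_le _ _
      _ = 2⁻¹ ^ (n+1) + 2⁻¹ ^ (n+1) := by rw [hleft, hright]
      _ = 2 * 2⁻¹ ^ (n+1) := by ring
      _ = (2 * 2⁻¹) * 2⁻¹ ^ n := by rw [pow_succ]; ring
      _ = 2⁻¹ ^ n := by rw [ENNReal.mul_inv_cancel (by norm_num) (by norm_num), one_mul]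
  have hNN : ∀ p q : ℝ, 0 ≤ p → p < q → q ≤ 1 → P (⋂ n, Nev p q n) = 0 := by
    intro p q hp0 hpq hq1
    by_contra hne
    obtain ⟨n, hn⟩ := ENNReal.exists_inv_two_pow_lt hne
    exact absurd (le_trans (measure_mono (Set.iInter_subset _ n)) (hNev p q hp0 hpq hq1 n))
      (not_le.mpr hn)
  set Nbig : ℚ × ℚ → Set Ω := fun r =>
    if 0 ≤ (r.1:ℝ) ∧ (r.1:ℝ) < r.2 ∧ (r.2:ℝ) ≤ 1 then ⋂ n, Nev r.1 r.2 n else ∅ with hNbigdef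
  have hNbig : P (⋃ r : ℚ × ℚ, Nbig r) = 0 := by
    apply measure_iUnion_null
    intro r
    by_cases h : 0 ≤ (r.1:ℝ) ∧ (r.1:ℝ) < r.2 ∧ (r.2:ℝ) ≤ 1
    · simp only [hNbigdef, if_pos h]
      exact hNN _ _ h.1 h.2.1 h.2.2
    · rw [hNbigdef]
      simp only [if_neg h]
      simp
  have hae := measure_eq_zero_iff_ae_notMem.mp hNbig
  filter_upwards [hcont, hae] with ω hc hnm
  intro t ht
  by_contra htc
  rw [Metric.mem_closure_iff] at htc
  push_neg at htc
  obtain ⟨ε, hε, hfar⟩ := htc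
  have hno : ∀ c : ℝ, |c - t| < ε →
      ¬ (c ∈ Set.Ioo (0:ℝ) 1 ∧ ∃ δ > (0:ℝ), ∀ s ∈ Set.Ioo (c - δ) (c + δ) ∩ Set.Icc (0:ℝ) 1,
        B c ω ≤ B s ω) := by
    intro c hcball hcS
    have := hfar c hcS
    rw [Real.dist_eq, abs_sub_comm] at this
    exact absurd hcball (not_lt.mpr this)
  obtain ⟨p, q, hp0, hpq, hq1, hm⟩ := no_min_implies_monotone hc ht hε hno
  have hnotin : ω ∉ Nbig (p, q) := fun h => hnm (Set.mem_iUnion.mpr ⟨(p,q), h⟩)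
  rw [hNbigdef] at hnotin
  simp only [if_pos (⟨hp0, hpq, hq1⟩ : 0 ≤ (p:ℝ) ∧ (p:ℝ) < q ∧ (q:ℝ) ≤ 1)] at hnotin
  rw [Set.mem_iInter] at hnotin
  push_neg at hnotin
  obtain ⟨n, hnot⟩ := hnotin
  rw [hNevdef] at hnot
  simp only [Set.mem_union, not_or] at hnot
  set g := bmGrid (p:ℝ) (q:ℝ) n with hg
  have hmemI : ∀ i, g i ∈ Set.Icc (p:ℝ) (q:ℝ) := fun i => bmGrid_mem hpq.le n i
  have hle : ∀ i : Fin (n+1), g i.castSucc ≤ g i.succ :=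
    fun i => bmGrid_mono hpq.le n (Fin.castSucc_lt_succ : i.castSucc < i.succ).le
  rcases hm with hm | hm
  · apply hnot.1
    rw [Set.mem_iInter]
    intro i
    simp only [Set.mem_preimage, Set.mem_Ici, sub_nonneg]
    exact hm (hmemI i.castSucc) (hmemI i.succ) (hle i)
  · apply hnot.2
    rw [Set.mem_iInter]
    intro i
    simp only [Set.mem_preimage, Set.mem_Iic, sub_nonpos]
    exact hm (hmemI i.castSucc) (hmemI i.succ) (hle i)
end

section
/- Let μ be a finite Borel measure on the product space (0, 1/2) × C([0,1], ℝ) such that for μ-almost every pair (t, ω) there exists δ₀ > 0 with ω(t+δ) > ω(t) for all δ ∈ (0, δ₀). For integers n ≥ 1 and δ ∈ (0, 1/2), define ψ_{n,δ} : (0,1/2) × C([0,1], ℝ) → [−1, 1] by ψ_{n,δ}(t, ω) = Σ_{k=1}^{n} 1_{[(k−1)/(2n), k/(2n))}(t) · sign( ω(k/(2n) + δ) − ω(k/(2n)) ). Then: (i) ∫ ψ_{n,δ} dμ ≤ μ(total) for all n, δ; and (ii) lim_{δ→0+} liminf_{n→∞} ∫ ψ_{n,δ} dμ = μ(total), where μ(total)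 is the total mass of μ. (This is the analytic core of Lemma 4.3: for every f in the first superchaos localized on (0, 1/2), the quantities ⟨𝓒_{ψ_{n,δ}}⟩_f = ∫ ψ_{n,δ} dμ_f converge to ‖f‖², because μ_f is carried by pairs (t, ω) where t is a strict local minimizer of the Brownian path ω.) -/
open MeasureTheory Filter
open scoped Topology

noncomputable instance : MeasurableSpace C(Set.Icc (0 : ℝ) 1, ℝ) := borel _
instance : BorelSpace C(Set.Icc (0 : ℝ) 1, ℝ) := ⟨rfl⟩

/-- Evaluation of a continuous function on `[0,1]` at a real point of `[0,1]`
(points are clamped into `[0,1]`; on `[0,1]` this is just evaluation). -/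
noncomputable def ev (ω : C(Set.Icc (0 : ℝ) 1, ℝ)) (x : ℝ) : ℝ :=
  ω (Set.projIcc 0 1 zero_le_one x)

/-- `ψ_{n,δ}(t, ω) = Σ_{k=1}^{n} 1_{[(k-1)/(2n), k/(2n))}(t) ⋅ sign (ω(k/(2n) + δ) - ω(k/(2n)))`. -/
noncomputable def psi (n : ℕ) (δ : ℝ)
    (p : Set.Ioo (0 : ℝ) (1/2) × C(Set.Icc (0 : ℝ) 1, ℝ)) : ℝ :=
  ∑ k ∈ Finset.Icc 1 n,
    (Set.Ico (((k : ℝ) - 1) / (2 * n)) ((k : ℝ) / (2 * n))).indicator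
        (fun _ => (1 : ℝ)) (p.1 : ℝ)
      * Real.sign (ev p.2 ((k : ℝ) / (2 * n) + δ) - ev p.2 ((k : ℝ) / (2 * n)))

/-! ### Auxiliary lemmas -/

lemma measurable_realSign : Measurable Real.sign := by
  have h : (Real.sign : ℝ → ℝ) = fun r =>
      (Set.Iio (0:ℝ)).indicator (fun _ => (-1:ℝ)) r
        + (Set.Ioi (0:ℝ)).indicator (fun _ => (1:ℝ)) r := by
    funext r
    rcases lt_trichotomy r 0 with hr | hr | hr
    · simp [Real.sign_of_neg hr, Set.indicator_of_mem (Set.mem_Iio.2 hr),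
        Set.indicator_of_notMem (by simp [Set.mem_Ioi]; linarith : r ∉ Set.Ioi (0:ℝ))]
    · subst hr
      simp [Real.sign_zero]
    · simp [Real.sign_of_pos hr, Set.indicator_of_mem (Set.mem_Ioi.2 hr),
        Set.indicator_of_notMem (by simp [Set.mem_Iio]; linarith : r ∉ Set.Iio (0:ℝ))]
  rw [h]
  exact (measurable_const.indicator measurableSet_Iio).add
    (measurable_const.indicator measurableSet_Ioi)

lemma abs_realSign_le (x : ℝ) : |Real.sign x| ≤ 1 := by
  rcases Real.sign_apply_eq x with h | h | h <;> simp [h]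

lemma continuous_ev (ω : C(Set.Icc (0 : ℝ) 1, ℝ)) : Continuous (ev ω) :=
  ω.continuous.comp continuous_projIcc

/-- The unique index `k ∈ [1, n]` such that `t ∈ [(k-1)/(2n), k/(2n))`. -/
noncomputable def Kn (n : ℕ) (t : ℝ) : ℕ := ⌊2 * (n : ℝ) * t⌋₊ + 1

section Kn

variable {n : ℕ} {t : ℝ}

lemma Kn_lb (hn : 1 ≤ n) (ht : 0 < t) : ((Kn n t : ℝ) - 1) / (2 * n) ≤ t := by
  have hn0 : (0:ℝ) < 2 * n := by positivity
  have h1 : ((⌊2 * (n : ℝ) * t⌋₊ : ℝ)) ≤ 2 * n * t :=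
    Nat.floor_le (by positivity)
  rw [div_le_iff₀ hn0]
  have : ((Kn n t : ℝ) - 1) = (⌊2 * (n : ℝ) * t⌋₊ : ℝ) := by
    simp [Kn]
  rw [this]
  linarith
lemma Kn_ub (hn : 1 ≤ n) (ht : 0 < t) : t < (Kn n t : ℝ) / (2 * n) := by
  have hn0 : (0:ℝ) < 2 * n := by positivity
  have h2 : 2 * (n : ℝ) * t < (⌊2 * (n : ℝ) * t⌋₊ : ℝ) + 1 :=
    Nat.lt_floor_add_one _
  rw [lt_div_iff₀ hn0]
  have : (Kn n t : ℝ) = (⌊2 * (n : ℝ) * t⌋₊ : ℝ) + 1 := by simp [Kn]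
  rw [this]
  linarith

lemma Kn_mem (hn : 1 ≤ n) (ht : 0 < t) (ht2 : t < 1/2) : Kn n t ∈ Finset.Icc 1 n := by
  have hn0 : (0:ℝ) < n := by exact_mod_cast hn
  have hlt : 2 * (n : ℝ) * t < n := by nlinarith
  have : ⌊2 * (n : ℝ) * t⌋₊ < n := by
    rw [Nat.floor_lt (by positivity)]
    exact_mod_cast hlt
  simp only [Finset.mem_Icc, Kn]
  omega

lemma Kn_uniq (hn : 1 ≤ n) (ht : 0 < t) {k : ℕ} (hk : k ∈ Finset.Icc 1 n)
    (hmem : t ∈ Set.Ico (((k : ℝ) - 1) / (2 * n)) ((k : ℝ) / (2 * n))) : k = Kn n t := by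
  have hn0 : (0:ℝ) < 2 * n := by positivity
  obtain ⟨h1, h2⟩ := hmem
  rw [div_le_iff₀ hn0] at h1
  rw [lt_div_iff₀ hn0] at h2
  have hK1 : ((⌊2 * (n : ℝ) * t⌋₊ : ℝ)) ≤ 2 * n * t := Nat.floor_le (by positivity)
  have hK2 : 2 * (n : ℝ) * t < (⌊2 * (n : ℝ) * t⌋₊ : ℝ) + 1 := Nat.lt_floor_add_one _
  have e1 : (k : ℝ) < (⌊2 * (n : ℝ) * t⌋₊ : ℝ) + 2 := by nlinarith
  have e2 : ((⌊2 * (n : ℝ) * t⌋₊ : ℝ)) < (k : ℝ) := by nlinarith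
  have e1' : k < ⌊2 * (n : ℝ) * t⌋₊ + 2 := by exact_mod_cast e1
  have e2' : ⌊2 * (n : ℝ) * t⌋₊ < k := by exact_mod_cast e2
  simp only [Kn]
  omega

end Kn

lemma psi_eq (n : ℕ) (hn : 1 ≤ n) (δ : ℝ)
    (p : Set.Ioo (0 : ℝ) (1/2) × C(Set.Icc (0 : ℝ) 1, ℝ)) :
    psi n δ p =
      Real.sign (ev p.2 ((Kn n (p.1 : ℝ) : ℝ) / (2 * n) + δ)
        - ev p.2 ((Kn n (p.1 : ℝ) : ℝ) / (2 * n))) := by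
  obtain ⟨ht1, ht2⟩ := p.1.2
  unfold psi
  rw [Finset.sum_eq_single_of_mem (Kn n (p.1 : ℝ)) (Kn_mem hn ht1 ht2)]
  · rw [Set.indicator_of_mem (Set.mem_Ico.2 ⟨Kn_lb hn ht1, Kn_ub hn ht1⟩), one_mul]
  · intro k hk hne
    rw [Set.indicator_of_notMem, zero_mul]
    intro hmem
    exact hne (Kn_uniq hn ht1 hk hmem)

lemma abs_psi_le (n : ℕ) (δ : ℝ)
    (p : Set.Ioo (0 : ℝ) (1/2) × C(Set.Icc (0 : ℝ) 1, ℝ)) : |psi n δ p| ≤ 1 := by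
  rcases Nat.eq_zero_or_pos n with hn | hn
  · subst hn
    simp [psi]
  · rw [psi_eq n hn δ p]
    exact abs_realSign_le _

lemma psi_measurable (n : ℕ) (δ : ℝ) : Measurable (psi n δ) := by
  unfold psi
  refine Finset.measurable_sum _ fun k _ => Measurable.mul ?_ ?_
  · exact (measurable_const.indicator measurableSet_Ico).comp
      (measurable_subtype_coe.comp measurable_fst)
  · refine measurable_realSign.comp ?_
    have h1 : Continuous fun p : Set.Ioo (0 : ℝ) (1/2) × C(Set.Icc (0 : ℝ) 1, ℝ) =>
        ev p.2 ((k : ℝ) / (2 * n) + δ) :=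
      (continuous_eval_const _).comp continuous_snd
    have h2 : Continuous fun p : Set.Ioo (0 : ℝ) (1/2) × C(Set.Icc (0 : ℝ) 1, ℝ) =>
        ev p.2 ((k : ℝ) / (2 * n)) :=
      (continuous_eval_const _).comp continuous_snd
    exact (h1.sub h2).measurable

lemma tendsto_psi (p : Set.Ioo (0 : ℝ) (1/2) × C(Set.Icc (0 : ℝ) 1, ℝ))
    {δ₀ : ℝ} (hδ₀ : 0 < δ₀)
    (hp : ∀ δ ∈ Set.Ioo (0 : ℝ) δ₀, ev p.2 ((p.1 : ℝ) + δ) > ev p.2 (p.1 : ℝ))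
    {δ : ℝ} (hδ : δ ∈ Set.Ioo (0 : ℝ) δ₀) :
    Tendsto (fun n : ℕ => psi n δ p) atTop (𝓝 1) := by
  set t : ℝ := (p.1 : ℝ) with htdef
  set ω := p.2
  obtain ⟨ht1, ht2⟩ := p.1.2
  set c : ℕ → ℝ := fun n => (Kn n t : ℝ) / (2 * n) with hcdef
  -- c n → t
  have hub : ∀ n : ℕ, 1 ≤ n → c n ≤ t + 1 / (2 * n) := by
    intro n hn
    have hn0 : (0:ℝ) < 2 * n := by positivity
    have h2 : 2 * (n : ℝ) * t < (⌊2 * (n : ℝ) * t⌋₊ : ℝ) + 1 := Nat.lt_floor_add_one _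
    have h1 : ((⌊2 * (n : ℝ) * t⌋₊ : ℝ)) ≤ 2 * n * t := Nat.floor_le (by positivity)
    have : (Kn n t : ℝ) = (⌊2 * (n : ℝ) * t⌋₊ : ℝ) + 1 := by simp [Kn]
    rw [hcdef]
    simp only
    rw [this, div_le_iff₀ hn0]
    have ht' : (t + 1 / (2 * n)) * (2 * n) = 2 * n * t + 1 := by field_simp
    rw [ht']
    linarith
  have hlb : ∀ n : ℕ, 1 ≤ n → t ≤ c n := fun n hn => (Kn_ub hn ht1).le
  have hc : Tendsto c atTop (𝓝 t) := by
    have haux : Tendsto (fun n : ℕ => t + 1 / (2 * (n:ℝ))) atTop (𝓝 t) := by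
      have h0 : Tendsto (fun n : ℕ => 1 / (2 * (n:ℝ))) atTop (𝓝 0) := by
        have := tendsto_one_div_atTop_nhds_zero_nat (𝕜 := ℝ)
        have h := this.const_mul (1/2 : ℝ)
        simp only [mul_zero] at h
        convert h using 2 with n
        field_simp
      have := tendsto_const_nhds.add h0 (f := fun _ : ℕ => t) (x := atTop)
      simpa using this
    refine tendsto_of_tendsto_of_tendsto_of_le_of_le' tendsto_const_nhds haux ?_ ?_
    · filter_upwards [eventually_ge_atTop 1] with n hn using hlb n hn
    · filter_upwards [eventually_ge_atTop 1] with n hn using hub n hn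
  have hcont : Continuous (ev ω) := continuous_ev ω
  have hlim : Tendsto (fun n => ev ω (c n + δ) - ev ω (c n)) atTop
      (𝓝 (ev ω (t + δ) - ev ω t)) := by
    have l1 : Tendsto (fun n => ev ω (c n + δ)) atTop (𝓝 (ev ω (t + δ))) :=
      (hcont.tendsto _).comp (hc.add tendsto_const_nhds)
    have l2 : Tendsto (fun n => ev ω (c n)) atTop (𝓝 (ev ω t)) :=
      (hcont.tendsto _).comp hc
    exact l1.sub l2
  have hpos : (0:ℝ) < ev ω (t + δ) - ev ω t := sub_pos.mpr (hp δ hδ)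
  have hev : ∀ᶠ n : ℕ in atTop, 0 < ev ω (c n + δ) - ev ω (c n) :=
    hlim.eventually (eventually_gt_nhds hpos)
  have heq : ∀ᶠ n : ℕ in atTop, psi n δ p = 1 := by
    filter_upwards [hev, eventually_ge_atTop 1] with n h1 h2
    rw [psi_eq n h2 δ p]
    exact Real.sign_of_pos h1
  exact tendsto_const_nhds.congr' (heq.mono fun n h => h.symm)

/-- Fatou's lemma for uniformly bounded real-valued functions on a finite measure space. -/
lemma fatou_bounded {α : Type*} [MeasurableSpace α] (μ : Measure α) [IsFiniteMeasure μ]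
    (f : ℕ → α → ℝ) (hm : ∀ n, Measurable (f n)) (hb : ∀ n x, |f n x| ≤ 1) :
    ∫ x, liminf (fun n => f n x) atTop ∂μ ≤ liminf (fun n => ∫ x, f n x ∂μ) atTop := by
  set M := (μ Set.univ).toReal with hMdef
  have hM0 : 0 ≤ M := ENNReal.toReal_nonneg
  have hint : ∀ n, Integrable (f n) μ := fun n =>
    (integrable_const (1:ℝ)).mono' (hm n).aestronglyMeasurable
      (ae_of_all _ fun x => by simpa using hb n x)
  have hIle : ∀ n, ∫ x, f n x ∂μ ≤ M := by
    intro n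
    calc ∫ x, f n x ∂μ ≤ ∫ _, (1:ℝ) ∂μ :=
          integral_mono (hint n) (integrable_const 1) (fun x => (abs_le.1 (hb n x)).2)
      _ = M := by simp [integral_const, hMdef, Measure.real]
  have hIge : ∀ n, -M ≤ ∫ x, f n x ∂μ := by
    intro n
    calc -M = ∫ _, (-1:ℝ) ∂μ := by simp [integral_const, hMdef, Measure.real]
      _ ≤ ∫ x, f n x ∂μ :=
          integral_mono (integrable_const (-1)) (hint n) (fun x => (abs_le.1 (hb n x)).1)
  set g : α → ℝ := fun x => liminf (fun n => f n x) atTop with hgdef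
  have hgm : Measurable g := Measurable.liminf hm
  have bddb : ∀ x, IsBoundedUnder (· ≥ ·) atTop (fun n => f n x) := fun x =>
    isBoundedUnder_of ⟨-1, fun n => (abs_le.1 (hb n x)).1⟩
  have cobd : ∀ x, IsCoboundedUnder (· ≥ ·) atTop (fun n => f n x) := fun x =>
    (isBoundedUnder_of (r := (· ≤ ·)) ⟨1, fun n => (abs_le.1 (hb n x)).2⟩).isCoboundedUnder_ge
  have hgb : ∀ x, |g x| ≤ 1 := by
    intro x
    rw [abs_le]
    constructor
    · exact le_liminf_of_le (cobd x) (Eventually.of_forall fun n => (abs_le.1 (hb n x)).1)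
    · refine liminf_le_of_le (bddb x) fun b hb' => ?_
      obtain ⟨n, hn⟩ := hb'.exists
      exact hn.trans (abs_le.1 (hb n x)).2
  have hgint : Integrable g μ :=
    (integrable_const (1:ℝ)).mono' hgm.aestronglyMeasurable
      (ae_of_all _ fun x => by simpa using hgb x)
  have bddb1 : ∀ x, IsBoundedUnder (· ≥ ·) atTop (fun n => f n x + 1) := fun x =>
    isBoundedUnder_of ⟨0, fun n => by linarith [(abs_le.1 (hb n x)).1]⟩
  have cobd1 : ∀ x, IsCoboundedUnder (· ≥ ·) atTop (fun n => f n x + 1) := fun x =>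
    (isBoundedUnder_of (r := (· ≤ ·))
      ⟨2, fun n => by linarith [(abs_le.1 (hb n x)).2]⟩).isCoboundedUnder_ge
  have hpt : ∀ x, ENNReal.ofReal (g x + 1)
      = liminf (fun n => ENNReal.ofReal (f n x + 1)) atTop := by
    intro x
    have h1 : liminf (fun n => f n x + 1) atTop = g x + 1 :=
      liminf_add_const atTop (fun n => f n x) 1 (cobd x) (bddb x)
    rw [← h1]
    exact Monotone.map_liminf_of_continuousAt
      (fun a b h => ENNReal.ofReal_le_ofReal h) (fun n => f n x + 1)
      ENNReal.continuous_ofReal.continuousAt (cobd1 x) (bddb1 x)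
  have bddI : IsBoundedUnder (· ≥ ·) atTop (fun n => ∫ x, f n x ∂μ) :=
    isBoundedUnder_of ⟨-M, hIge⟩
  have cobdI : IsCoboundedUnder (· ≥ ·) atTop (fun n => ∫ x, f n x ∂μ) :=
    (isBoundedUnder_of (r := (· ≤ ·)) ⟨M, hIle⟩).isCoboundedUnder_ge
  have bddI1 : IsBoundedUnder (· ≥ ·) atTop (fun n => ∫ x, f n x ∂μ + M) :=
    isBoundedUnder_of ⟨0, fun n => by linarith [hIge n]⟩
  have cobdI1 : IsCoboundedUnder (· ≥ ·) atTop (fun n => ∫ x, f n x ∂μ + M) :=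
    (isBoundedUnder_of (r := (· ≤ ·))
      ⟨2 * M, fun n => by linarith [hIle n]⟩).isCoboundedUnder_ge
  have key : ENNReal.ofReal (∫ x, g x ∂μ + M)
      ≤ ENNReal.ofReal (liminf (fun n => ∫ x, f n x ∂μ) atTop + M) := by
    calc ENNReal.ofReal (∫ x, g x ∂μ + M)
        = ENNReal.ofReal (∫ x, (g x + 1) ∂μ) := by
          rw [integral_add hgint (integrable_const 1)]
          simp [integral_const, hMdef, Measure.real]
      _ = ∫⁻ x, ENNReal.ofReal (g x + 1) ∂μ :=
          ofReal_integral_eq_lintegral_ofReal (hgint.add (integrable_const 1))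
            (ae_of_all _ fun x => show (0:ℝ) ≤ g x + 1 by linarith [(abs_le.1 (hgb x)).1])
      _ = ∫⁻ x, liminf (fun n => ENNReal.ofReal (f n x + 1)) atTop ∂μ :=
          lintegral_congr fun x => hpt x
      _ ≤ liminf (fun n => ∫⁻ x, ENNReal.ofReal (f n x + 1) ∂μ) atTop :=
          lintegral_liminf_le fun n => ((hm n).add measurable_const).ennreal_ofReal
      _ = liminf (fun n => ENNReal.ofReal (∫ x, f n x ∂μ + M)) atTop := by
          refine liminf_congr (Eventually.of_forall fun n => ?_)
          have hpos : 0 ≤ᵐ[μ] fun x => f n x + 1 := ae_of_all _ fun x =>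
            show (0:ℝ) ≤ f n x + 1 by linarith [(abs_le.1 (hb n x)).1]
          have h := ofReal_integral_eq_lintegral_ofReal ((hint n).add (integrable_const 1)) hpos
          simp only [Pi.add_apply] at h
          rw [integral_add (hint n) (integrable_const 1)] at h
          simp only [integral_const, smul_eq_mul, mul_one] at h
          exact h.symm
      _ = ENNReal.ofReal (liminf (fun n => ∫ x, f n x ∂μ + M) atTop) :=
          (Monotone.map_liminf_of_continuousAt
            (fun a b h => ENNReal.ofReal_le_ofReal h) (fun n => ∫ x, f n x ∂μ + M)
            ENNReal.continuous_ofReal.continuousAt cobdI1 bddI1).symm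
      _ = ENNReal.ofReal (liminf (fun n => ∫ x, f n x ∂μ) atTop + M) := by
          rw [liminf_add_const atTop (fun n => ∫ x, f n x ∂μ) M cobdI bddI]
  have hnn : -M ≤ liminf (fun n => ∫ x, f n x ∂μ) atTop :=
    le_liminf_of_le cobdI (Eventually.of_forall hIge)
  have h2 : ∫ x, g x ∂μ + M ≤ liminf (fun n => ∫ x, f n x ∂μ) atTop + M :=
    (ENNReal.ofReal_le_ofReal_iff (by linarith)).1 key
  linarith

/-- Analytic core of Lemma 4.3: if a finite Borel measure `μ` on `(0,1/2) × C([0,1], ℝ)` is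
carried by pairs `(t, ω)` such that `ω(t + δ) > ω(t)` for all small enough `δ > 0`, then
`∫ ψ_{n,δ} dμ ≤ μ(total)` for all `n ≥ 1`, `δ ∈ (0,1/2)`, and
`liminf_{n→∞} ∫ ψ_{n,δ} dμ → μ(total)` as `δ → 0+`. -/
theorem liminf_integral_psi_tendsto_total_mass
    (μ : Measure (Set.Ioo (0 : ℝ) (1/2) × C(Set.Icc (0 : ℝ) 1, ℝ)))
    [IsFiniteMeasure μ]
    (hμ : ∀ᵐ p ∂μ, ∃ δ₀ > (0 : ℝ), ∀ δ ∈ Set.Ioo (0 : ℝ) δ₀,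
      ev p.2 ((p.1 : ℝ) + δ) > ev p.2 (p.1 : ℝ)) :
    (∀ n : ℕ, 1 ≤ n → ∀ δ ∈ Set.Ioo (0 : ℝ) (1/2),
      ∫ p, psi n δ p ∂μ ≤ (μ Set.univ).toReal) ∧
    Tendsto (fun δ : ℝ => liminf (fun n : ℕ => ∫ p, psi n δ p ∂μ) atTop)
      (𝓝[>] (0 : ℝ)) (𝓝 ((μ Set.univ).toReal)) := by
  set M := (μ Set.univ).toReal with hMdef
  have hM0 : 0 ≤ M := ENNReal.toReal_nonneg
  have hint : ∀ n δ, Integrable (psi n δ) μ := fun n δ =>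
    (integrable_const (1:ℝ)).mono' (psi_measurable n δ).aestronglyMeasurable
      (ae_of_all _ fun p => by simpa using abs_psi_le n δ p)
  have hIle : ∀ n δ, ∫ p, psi n δ p ∂μ ≤ M := by
    intro n δ
    calc ∫ p, psi n δ p ∂μ ≤ ∫ _, (1:ℝ) ∂μ :=
          integral_mono (hint n δ) (integrable_const 1)
            (fun p => (abs_le.1 (abs_psi_le n δ p)).2)
      _ = M := by simp [integral_const, hMdef, Measure.real]
  have hIge : ∀ n δ, -M ≤ ∫ p, psi n δ p ∂μ := by
    intro n δ
    calc -M = ∫ _, (-1:ℝ) ∂μ := by simp [integral_const, hMdef, Measure.real]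
      _ ≤ ∫ p, psi n δ p ∂μ :=
          integral_mono (integrable_const (-1)) (hint n δ)
            (fun p => (abs_le.1 (abs_psi_le n δ p)).1)
  refine ⟨fun n _ δ _ => hIle n δ, ?_⟩
  -- the liminf functions
  set g : ℝ → _ → ℝ := fun δ p => liminf (fun n : ℕ => psi n δ p) atTop with hgdef
  have hg_meas : ∀ δ, Measurable (g δ) := fun δ =>
    Measurable.liminf (fun n => psi_measurable n δ)
  have hg_bdd : ∀ δ p, |g δ p| ≤ 1 := by
    intro δ p
    rw [abs_le]
    constructor
    · refine le_liminf_of_le ?_ (Eventually.of_forall fun n => (abs_le.1 (abs_psi_le n δ p)).1)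
      exact (isBoundedUnder_of (r := (· ≤ ·))
        ⟨1, fun n => (abs_le.1 (abs_psi_le n δ p)).2⟩).isCoboundedUnder_ge
    · refine liminf_le_of_le
        (isBoundedUnder_of ⟨-1, fun n => (abs_le.1 (abs_psi_le n δ p)).1⟩) fun b hb' => ?_
      obtain ⟨n, hn⟩ := hb'.exists
      exact hn.trans (abs_le.1 (abs_psi_le n δ p)).2
  have hfatou : ∀ δ, ∫ p, g δ p ∂μ ≤ liminf (fun n : ℕ => ∫ p, psi n δ p ∂μ) atTop :=
    fun δ => fatou_bounded μ (fun n => psi n δ) (fun n => psi_measurable n δ)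
      (fun n => abs_psi_le n δ)
  have hliminf_le : ∀ δ, liminf (fun n : ℕ => ∫ p, psi n δ p ∂μ) atTop ≤ M := by
    intro δ
    refine liminf_le_of_le (isBoundedUnder_of ⟨-M, fun n => hIge n δ⟩) fun b hb' => ?_
    obtain ⟨n, hn⟩ := hb'.exists
    exact hn.trans (hIle n δ)
  have hDCT : Tendsto (fun δ => ∫ p, g δ p ∂μ) (𝓝[>] (0:ℝ)) (𝓝 M) := by
    have h := tendsto_integral_filter_of_dominated_convergence (μ := μ)
      (l := 𝓝[>] (0:ℝ)) (F := g) (f := fun _ => (1:ℝ)) (bound := fun _ => (1:ℝ))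
      (Eventually.of_forall fun δ => (hg_meas δ).aestronglyMeasurable)
      (Eventually.of_forall fun δ => ae_of_all _ fun p => by
        simpa using hg_bdd δ p)
      (integrable_const 1)
      ?_
    · simpa [integral_const, hMdef, Measure.real] using h
    · filter_upwards [hμ] with p hp
      obtain ⟨δ₀, hδ₀, hp⟩ := hp
      have hev : ∀ᶠ δ in 𝓝[>] (0:ℝ), g δ p = 1 := by
        filter_upwards [Ioo_mem_nhdsGT_of_mem (Set.mem_Ico.2 ⟨le_refl (0:ℝ), hδ₀⟩)]
          with δ hδ
        exact (tendsto_psi p hδ₀ hp hδ).liminf_eq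
      exact tendsto_const_nhds.congr' (hev.mono fun δ h => h.symm)
  refine tendsto_of_tendsto_of_tendsto_of_le_of_le hDCT tendsto_const_nhds
    (fun δ => hfatou δ) (fun δ => hliminf_le δ)
end
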